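/- Let n ≥ 1, let l₁, …, lₙ > 0, let P = ∏ᵢ [0, lᵢ] ⊆ ℝⁿ, and let ρ ≥ 0. Then vol(P_ρ) = Σ_{k=0}^{n} κ_k · s_{n−k}(l₁, …, lₙ) · ρ^k, where κ_k is the volume of the unit ball in ℝ^k (with κ₀ = 1) and P_ρ = {x : dist(x, P) ≤ ρ}. -/

import Mathlib

open MeasureTheory Metric Set

noncomputable def dd (l t : ℝ) : ℝ := max 0 (max (-t) (t - l))

lemma dd_mid {l t : ℝ} (h0 : 0 ≤ t) (h1 : t ≤ l) : dd l t = 0 :=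
  max_eq_left (max_le (by linarith) (by linarith))

lemma dd_neg {l t : ℝ} (hl : 0 < l) (h : t < 0) : dd l t = -t := by
  unfold dd
  rw [max_eq_left (by linarith : t - l ≤ -t)]
  exact max_eq_right (by linarith)

lemma dd_gt {l t : ℝ} (hl : 0 < l) (h : l < t) : dd l t = t - l := by
  unfold dd
  rw [max_eq_right (by linarith : -t ≤ t - l)]
  exact max_eq_right (by linarith)

lemma clamp_sq (l t : ℝ) (hl : 0 < l) : (t - max 0 (min t l))^2 = (dd l t)^2 := by
  rcases lt_or_ge t 0 with h | h
  · rw [dd_neg hl h, min_eq_left (by linarith), max_eq_left (by linarith)]; ring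
  rcases le_or_gt t l with h2 | h2
  · rw [dd_mid h h2, min_eq_left h2, max_eq_right h]; ring
  · rw [dd_gt hl h2, min_eq_right h2.le, max_eq_right hl.le]

lemma clamp_near (l t y : ℝ) (hl : 0 < l) (hy0 : 0 ≤ y) (hyl : y ≤ l) :
    |t - max 0 (min t l)| ≤ |t - y| := by
  rcases lt_or_ge t 0 with h | h
  · rw [min_eq_left (by linarith), max_eq_left (by linarith), abs_of_nonpos (by linarith),
      abs_of_nonpos (by linarith)]
    linarith
  rcases le_or_gt t l with h2 | h2
  · rw [min_eq_left h2, max_eq_right h]; simp [abs_nonneg]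
  · rw [min_eq_right h2.le, max_eq_right hl.le, abs_of_nonneg (by linarith),
      abs_of_nonneg (by linarith)]
    linarith

lemma set_eq (n : ℕ) (l : Fin n → ℝ) (hl : ∀ i, 0 < l i) (ρ : ℝ) (hρ : 0 ≤ ρ) :
    {x : EuclideanSpace ℝ (Fin n) |
        Metric.infDist x {y : EuclideanSpace ℝ (Fin n) | ∀ i, 0 ≤ y i ∧ y i ≤ l i} ≤ ρ}
    = {x : EuclideanSpace ℝ (Fin n) | ∑ i, (dd (l i) (x i))^2 ≤ ρ^2} := by
  set P : Set (EuclideanSpace ℝ (Fin n)) := {y | ∀ i, 0 ≤ y i ∧ y i ≤ l i} with hP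
  ext x
  set p : EuclideanSpace ℝ (Fin n) := WithLp.toLp 2 (fun i => max 0 (min (x i) (l i))) with hp
  have hpP : p ∈ P := by
    intro i
    refine ⟨le_max_left _ _, ?_⟩
    simp only [hp, WithLp.ofLp_toLp, max_le_iff]
    exact ⟨(hl i).le, min_le_right _ _⟩
  have hdist : dist x p = Real.sqrt (∑ i, (dd (l i) (x i))^2) := by
    rw [EuclideanSpace.dist_eq]
    congr 1
    refine Finset.sum_congr rfl fun i _ => ?_
    rw [Real.dist_eq, sq_abs]
    exact clamp_sq (l i) (x i) (hl i)
  have hnear : ∀ y ∈ P, dist x p ≤ dist x y := by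
    intro y hy
    rw [EuclideanSpace.dist_eq, EuclideanSpace.dist_eq]
    apply Real.sqrt_le_sqrt
    refine Finset.sum_le_sum fun i _ => ?_
    rw [Real.dist_eq, Real.dist_eq]
    exact pow_le_pow_left₀ (abs_nonneg _)
      (clamp_near (l i) (x i) (y i) (hl i) (hy i).1 (hy i).2) 2
  have hinf : Metric.infDist x P = dist x p := by
    refine le_antisymm (Metric.infDist_le_dist_of_mem hpP) ?_
    by_contra h
    push_neg at h
    obtain ⟨y, hy, hlt⟩ := (Metric.infDist_lt_iff ⟨p, hpP⟩).mp h
    exact absurd hlt (not_lt.mpr (hnear y hy))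
  simp only [Set.mem_setOf_eq, hinf, hdist, Real.sqrt_le_iff] at *
  constructor
  · exact fun h => h.2
  · exact fun h => ⟨hρ, h⟩

def Rg {n : ℕ} (l : Fin n → ℝ) (i : Fin n) (j : Fin 3) : Set ℝ :=
  if j = 0 then Iio 0 else if j = 1 then Icc 0 (l i) else Ioi (l i)

def SS {n : ℕ} (l : Fin n → ℝ) (ρ : ℝ) : Set (Fin n → ℝ) :=
  {u | ∑ i, (dd (l i) (u i))^2 ≤ ρ^2}

def RR {n : ℕ} (l : Fin n → ℝ) (ε : Fin n → Fin 3) : Set (Fin n → ℝ) :=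
  univ.pi fun i => Rg l i (ε i)

lemma meas_SS {n : ℕ} (l : Fin n → ℝ) (ρ : ℝ) : MeasurableSet (SS l ρ) := by
  have : Continuous fun u : Fin n → ℝ => ∑ i, (dd (l i) (u i))^2 := by
    unfold dd; fun_prop
  exact (isClosed_le this continuous_const).measurableSet

lemma meas_Rg {n : ℕ} (l : Fin n → ℝ) (i : Fin n) (j : Fin 3) : MeasurableSet (Rg l i j) := by
  unfold Rg; split_ifs <;> measurability

lemma meas_RR {n : ℕ} (l : Fin n → ℝ) (ε : Fin n → Fin 3) : MeasurableSet (RR l ε) :=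
  MeasurableSet.univ_pi fun i => meas_Rg l i (ε i)

lemma disj_Rg {n : ℕ} (l : Fin n → ℝ) (hl : ∀ i, 0 < l i) (i : Fin n) {j j' : Fin 3}
    (h : j ≠ j') : Disjoint (Rg l i j) (Rg l i j') := by
  have hli := hl i
  fin_cases j <;> fin_cases j' <;> simp_all [Rg, Set.disjoint_left] <;> intros <;> linarith [hl i]

lemma partition_vol {n : ℕ} (l : Fin n → ℝ) (hl : ∀ i, 0 < l i) (ρ : ℝ) :
    volume (SS l ρ) = ∑ ε : Fin n → Fin 3, volume (SS l ρ ∩ RR l ε) := by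
  have hcov : (⋃ ε : Fin n → Fin 3, SS l ρ ∩ RR l ε) = SS l ρ := by
    ext x
    simp only [mem_iUnion, mem_inter_iff]
    constructor
    · rintro ⟨ε, hx, -⟩; exact hx
    · intro hx
      refine ⟨fun i => if x i < 0 then 0 else if x i ≤ l i then 1 else 2, hx, ?_⟩
      intro i _
      by_cases h1 : x i < 0
      · simp [Rg, h1]
      by_cases h2 : x i ≤ l i
      · simp [Rg, h1, h2, le_of_not_gt h1]
      · simp only [h1, h2, if_false, if_true, Rg]
        norm_num
        exact lt_of_not_ge h2
  conv_lhs => rw [← hcov]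
  rw [measure_iUnion ?_ fun ε => (meas_SS l ρ).inter (meas_RR l ε), tsum_fintype]
  intro ε ε' hne
  obtain ⟨i, hi⟩ := Function.ne_iff.mp hne
  refine Set.disjoint_left.mpr fun x hx hx' => ?_
  exact Set.disjoint_left.mp (disj_Rg l hl i hi) (hx.2 i (mem_univ i)) (hx'.2 i (mem_univ i))

def OO {n : ℕ} (ε : Fin n → Fin 3) (T : Finset (Fin n)) (i : {i // i ∈ T}) : Set ℝ :=
  if ε i.1 = 0 then Iio (0:ℝ) else Ioi 0

def XX {n : ℕ} (ε : Fin n → Fin 3) (T : Finset (Fin n)) (ρ : ℝ) : Set ({i // i ∈ T} → ℝ) :=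
  {v | (∀ i, v i ∈ OO ε T i) ∧ ∑ i, (v i)^2 ≤ ρ^2}

lemma meas_XX {n : ℕ} (ε : Fin n → Fin 3) (T : Finset (Fin n)) (ρ : ℝ) :
    MeasurableSet (XX ε T ρ) := by
  have h1 : MeasurableSet {v : {i // i ∈ T} → ℝ | ∀ i, v i ∈ OO ε T i} := by
    have : {v : {i // i ∈ T} → ℝ | ∀ i, v i ∈ OO ε T i} = univ.pi (OO ε T) := by
      ext v; simp [Set.mem_pi]
    rw [this]
    refine MeasurableSet.univ_pi fun i => ?_
    unfold OO; split_ifs <;> measurability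
  have h2 : MeasurableSet {v : {i // i ∈ T} → ℝ | ∑ i, (v i)^2 ≤ ρ^2} := by
    have : Continuous fun v : {i // i ∈ T} → ℝ => ∑ i, (v i)^2 := by fun_prop
    exact (isClosed_le this continuous_const).measurableSet
  exact h1.inter h2

lemma fin3 (j : Fin 3) : j = 0 ∨ j = 1 ∨ j = 2 := by fin_cases j <;> simp

lemma per_eps {n : ℕ} (l : Fin n → ℝ) (hl : ∀ i, 0 < l i) (ρ : ℝ)
    (ε : Fin n → Fin 3) (T : Finset (Fin n)) (hT : ∀ i, ε i ≠ 1 ↔ i ∈ T) :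
    volume (SS l ρ ∩ RR l ε)
      = ENNReal.ofReal (∏ i ∈ Tᶜ, l i) * volume (XX ε T ρ) := by
  classical
  set c : Fin n → ℝ := fun i => if ε i = 2 then l i else 0 with hc
  -- the translated set
  set Rg' : Fin n → Fin 3 → Set ℝ := fun i j =>
    if j = 0 then Iio 0 else if j = 1 then Icc 0 (l i) else Ioi 0 with hRg'
  set EE : Set (Fin n → ℝ) :=
    {u | (∀ i, u i ∈ Rg' i (ε i)) ∧ ∑ i ∈ T, (u i)^2 ≤ ρ^2} with hEE
  have hmp := measurePreserving_add_right (volume : Measure (Fin n → ℝ)) c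
  have hkey : (fun u : Fin n → ℝ => u + c) ⁻¹' (SS l ρ ∩ RR l ε) = EE := by
    ext u
    have hregi : ∀ i, (u i + c i ∈ Rg l i (ε i)) ↔ u i ∈ Rg' i (ε i) := by
      intro i
      rcases fin3 (ε i) with h | h | h <;>
        simp only [hc, hRg', Rg, h, if_pos, if_neg, reduceIte] <;> simp [Rg]
    have hsum : (∀ i, u i ∈ Rg' i (ε i)) →
        ∑ i, (dd (l i) (u i + c i))^2 = ∑ i ∈ T, (u i)^2 := by
      intro hreg
      have : ∀ i, (dd (l i) (u i + c i))^2 = if i ∈ T then (u i)^2 else 0 := by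
        intro i
        rcases fin3 (ε i) with h | h | h
        · have hiT : i ∈ T := (hT i).mp (by simp [h])
          have hreg' : u i < 0 := by have := hreg i; simpa [hRg', h] using this
          simp only [hc]
          rw [if_pos hiT, show (if ε i = 2 then l i else 0) = 0 by simp [h], add_zero,
            dd_neg (hl i) hreg']
          ring
        · have hiT : i ∉ T := fun hmem => by
            have := (hT i).mpr hmem; exact this h
          have hreg' : 0 ≤ u i ∧ u i ≤ l i := by
            have := hreg i; simpa [hRg', h] using this
          simp only [hc]
          rw [if_neg hiT, show (if ε i = 2 then l i else 0) = 0 by simp [h], add_zero,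
            dd_mid hreg'.1 hreg'.2]
          ring
        · have hiT : i ∈ T := (hT i).mp (by simp [h])
          have hreg' : 0 < u i := by have := hreg i; simpa [hRg', h] using this
          simp only [hc]
          rw [if_pos hiT, show (if ε i = 2 then l i else 0) = l i by simp [h],
            dd_gt (hl i) (by linarith : l i < u i + l i)]
          ring
      rw [Finset.sum_congr rfl fun i _ => this i, Finset.sum_ite_mem, Finset.univ_inter]
    simp only [Set.mem_preimage, Set.mem_inter_iff, hEE, Set.mem_setOf_eq, SS, RR,
      Set.mem_pi, Set.mem_univ, forall_true_left, Pi.add_apply]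
    constructor
    · rintro ⟨hs, hr⟩
      have hreg : ∀ i, u i ∈ Rg' i (ε i) := fun i => (hregi i).mp (hr i)
      exact ⟨hreg, by rw [← hsum hreg]; exact hs⟩
    · rintro ⟨hreg, hs⟩
      exact ⟨by rw [hsum hreg]; exact hs, fun i => (hregi i).mpr (hreg i)⟩
  have hvolEE : volume (SS l ρ ∩ RR l ε) = volume EE := by
    rw [← hkey]
    exact (hmp.measure_preimage ((meas_SS l ρ).inter (meas_RR l ε)).nullMeasurableSet).symm
  -- Fubini step
  set YY : Set ({i // i ∉ T} → ℝ) := univ.pi fun i => Icc 0 (l i.1) with hYY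
  have hmp2 := volume_preserving_piEquivPiSubtypeProd (fun _ : Fin n => ℝ) (fun i => i ∈ T)
  have hkey2 : (⇑(MeasurableEquiv.piEquivPiSubtypeProd (fun _ : Fin n => ℝ) (fun i => i ∈ T)))
      ⁻¹' ((XX ε T ρ) ×ˢ YY) = EE := by
    ext u
    simp only [Set.mem_preimage, MeasurableEquiv.piEquivPiSubtypeProd,
      MeasurableEquiv.coe_mk, Equiv.piEquivPiSubtypeProd, Equiv.coe_fn_mk,
      Set.mem_prod, XX, Set.mem_setOf_eq, hYY, Set.mem_pi, Set.mem_univ, forall_true_left,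
      hEE]
    have hsum2 : ∑ i ∈ T, (u i)^2 = ∑ i : {i // i ∈ T}, (u i.1)^2 :=
      Finset.sum_subtype T (fun x => Iff.rfl) _
    constructor
    · rintro ⟨⟨hO, hs⟩, hY⟩
      refine ⟨?_, by rw [hsum2]; exact hs⟩
      intro i
      by_cases hiT : i ∈ T
      · have := hO ⟨i, hiT⟩
        have hne1 : ε i ≠ 1 := (hT i).mpr hiT
        rcases fin3 (ε i) with h | h | h
        · simp only [OO, h, reduceIte] at this; simp [hRg', h, this]
        · exact absurd h hne1
        · simp only [OO, h, reduceIte] at this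
          simp only [hRg', h, reduceIte]
          simpa using this
      · have hone : ε i = 1 := by
          by_contra hne; exact hiT ((hT i).mp hne)
        have := hY ⟨i, hiT⟩
        simp only [hRg', hone, reduceIte]
        exact this
    · rintro ⟨hreg, hs⟩
      refine ⟨⟨?_, by rw [← hsum2]; exact hs⟩, ?_⟩
      · intro i
        have hne1 : ε i.1 ≠ 1 := (hT i.1).mpr i.2
        have := hreg i.1
        rcases fin3 (ε i.1) with h | h | h
        · simp only [hRg', h, reduceIte] at this; simp [OO, h, this]
        · exact absurd h hne1
        · simp only [hRg', h, reduceIte] at this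
          simp only [OO, h, reduceIte]
          simpa using this
      · intro i
        have hone : ε i.1 = 1 := by
          by_contra hne; exact i.2 ((hT i.1).mp hne)
        have := hreg i.1
        simp only [hRg', hone, reduceIte] at this
        exact this
  have hmeasXY : MeasurableSet ((XX ε T ρ) ×ˢ YY) :=
    (meas_XX ε T ρ).prod (MeasurableSet.univ_pi fun i => measurableSet_Icc)
  have hvolY : volume YY = ENNReal.ofReal (∏ i ∈ Tᶜ, l i) := by
    rw [hYY, volume_pi_pi]
    have : ∀ i : {i // i ∉ T}, volume (Icc (0:ℝ) (l i.1)) = ENNReal.ofReal (l i.1) := by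
      intro i; rw [Real.volume_Icc, sub_zero]
    rw [Finset.prod_congr rfl fun i _ => this i]
    rw [ENNReal.ofReal_prod_of_nonneg fun i _ => (hl i).le]
    exact (Finset.prod_subtype Tᶜ (fun x => Finset.mem_compl)
      (fun i => ENNReal.ofReal (l i))).symm
  rw [hvolEE, ← hkey2, hmp2.measure_preimage hmeasXY.nullMeasurableSet,
    ← hvolY, Measure.volume_eq_prod, Measure.prod_prod]
  rw [mul_comm]
  congr!

lemma fiber_sum {n : ℕ} (ρ : ℝ) (T : Finset (Fin n)) :
    ∑ ε ∈ Finset.univ.filter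
        (fun ε : Fin n → Fin 3 => (Finset.univ.filter fun i => ε i ≠ 1) = T),
        volume (XX ε T ρ)
      = volume {v : {i // i ∈ T} → ℝ | ∑ i, (v i)^2 ≤ ρ^2} := by
  classical
  set F := Finset.univ.filter
      (fun ε : Fin n → Fin 3 => (Finset.univ.filter fun i => ε i ≠ 1) = T) with hF
  have hmemF : ∀ ε ∈ F, ∀ i, (ε i ≠ 1 ↔ i ∈ T) := by
    intro ε hε i
    rw [hF, Finset.mem_filter] at hε
    rw [← hε.2, Finset.mem_filter]
    simp
  have hdisj : (↑F : Set (Fin n → Fin 3)).PairwiseDisjoint (fun ε => XX ε T ρ) := by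
    intro ε hε ε' hε' hne
    obtain ⟨i, hi⟩ := Function.ne_iff.mp hne
    have hiT : i ∈ T := by
      by_contra hiT
      have h1 : ε i = 1 := by
        by_contra h; exact hiT ((hmemF ε hε i).mp h)
      have h2 : ε' i = 1 := by
        by_contra h; exact hiT ((hmemF ε' hε' i).mp h)
      exact hi (h1.trans h2.symm)
    refine Set.disjoint_left.mpr fun v hv hv' => ?_
    have m1 := hv.1 ⟨i, hiT⟩
    have m2 := hv'.1 ⟨i, hiT⟩
    have hne1 : ε i ≠ 1 := (hmemF ε hε i).mpr hiT
    have hne1' : ε' i ≠ 1 := (hmemF ε' hε' i).mpr hiT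
    rcases fin3 (ε i) with h | h | h <;> rcases fin3 (ε' i) with h' | h' | h' <;>
      first
        | exact absurd h hne1
        | exact absurd h' hne1'
        | exact hi (h.trans h'.symm)
        | (simp only [OO, h, h', reduceIte] at m1 m2; simp at m1 m2; linarith)
  have hunion : (⋃ ε ∈ F, XX ε T ρ)
      = {v : {i // i ∈ T} → ℝ | ∑ i, (v i)^2 ≤ ρ^2} ∩ {v | ∀ i, v i ≠ 0} := by
    ext v
    simp only [mem_iUnion, mem_inter_iff, Set.mem_setOf_eq, exists_prop]
    constructor
    · rintro ⟨ε, hε, hO, hs⟩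
      refine ⟨hs, fun i => ?_⟩
      have := hO i
      rcases fin3 (ε i.1) with h | h | h <;> simp only [OO, h, reduceIte] at this <;>
        first
          | (simp at this; exact ne_of_lt this)
          | (simp at this; exact (ne_of_gt this))
    · rintro ⟨hs, hnz⟩
      refine ⟨fun i => if h : i ∈ T then (if v ⟨i, h⟩ < 0 then 0 else 2) else 1, ?_, ?_, hs⟩
      · rw [hF, Finset.mem_filter]
        refine ⟨Finset.mem_univ _, ?_⟩
        ext i
        rw [Finset.mem_filter]
        by_cases h : i ∈ T
        · simp only [dif_pos h, h, iff_true]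
          refine ⟨Finset.mem_univ _, ?_⟩
          split_ifs <;> decide
        · simp [h]
      · intro i
        have hc : (if h : i.1 ∈ T then (if v ⟨i.1, h⟩ < 0 then (0:Fin 3) else 2) else 1)
            = if v i < 0 then 0 else 2 := by
          rw [dif_pos i.2]
        rw [OO, hc]
        by_cases hv : v i < 0
        · simp [hv]
        · have : (0:ℝ) < v i := lt_of_le_of_ne (not_lt.mp hv) (Ne.symm (hnz i))
          simp [hv, this]
  have hN : volume (⋃ i : {i // i ∈ T}, {v : {i // i ∈ T} → ℝ | v i = 0}) = 0 := by
    refine measure_iUnion_null fun i => ?_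
    have : (volume : Measure ({i // i ∈ T} → ℝ)) = Measure.pi fun _ => volume := rfl
    rw [this]
    exact Measure.pi_hyperplane _ i 0
  have hmeasB : MeasurableSet {v : {i // i ∈ T} → ℝ | ∑ i, (v i)^2 ≤ ρ^2} := by
    have : Continuous fun v : {i // i ∈ T} → ℝ => ∑ i, (v i)^2 := by fun_prop
    exact (isClosed_le this continuous_const).measurableSet
  rw [← measure_biUnion_finset hdisj fun ε _ => meas_XX ε T ρ, hunion]
  apply le_antisymm (measure_mono inter_subset_left)
  calc volume {v : {i // i ∈ T} → ℝ | ∑ i, (v i)^2 ≤ ρ^2}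
      ≤ volume (({v : {i // i ∈ T} → ℝ | ∑ i, (v i)^2 ≤ ρ^2} ∩ {v | ∀ i, v i ≠ 0})
          ∪ ⋃ i : {i // i ∈ T}, {v : {i // i ∈ T} → ℝ | v i = 0}) := by
        apply measure_mono
        intro v hv
        by_cases h : ∀ i, v i ≠ 0
        · exact Or.inl ⟨hv, h⟩
        · push_neg at h
          obtain ⟨i, hi⟩ := h
          exact Or.inr (mem_iUnion.mpr ⟨i, hi⟩)
    _ ≤ _ + _ := measure_union_le _ _
    _ = _ := by rw [hN, add_zero]

lemma euclid_ball_vol (k : ℕ) (ρ : ℝ) (hρ : 0 ≤ ρ) :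
    volume {u : Fin k → ℝ | ∑ i, (u i)^2 ≤ ρ^2}
      = ENNReal.ofReal (ρ ^ k)
          * volume (Metric.closedBall (0 : EuclideanSpace ℝ (Fin k)) 1) := by
  have hE := EuclideanSpace.volume_preserving_symm_measurableEquiv_toLp (Fin k)
  have hmeas : MeasurableSet {u : Fin k → ℝ | ∑ i, (u i)^2 ≤ ρ^2} := by
    have : Continuous fun u : Fin k → ℝ => ∑ i, (u i)^2 := by fun_prop
    exact (isClosed_le this continuous_const).measurableSet
  have hpre : (⇑(MeasurableEquiv.toLp 2 (Fin k → ℝ)).symm)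
      ⁻¹' {u : Fin k → ℝ | ∑ i, (u i)^2 ≤ ρ^2}
      = Metric.closedBall (0 : EuclideanSpace ℝ (Fin k)) ρ := by
    ext x
    simp only [Set.mem_preimage, Set.mem_setOf_eq, Metric.mem_closedBall]
    rw [EuclideanSpace.dist_eq, Real.sqrt_le_iff]
    have hx : ∀ i, (MeasurableEquiv.toLp 2 (Fin k → ℝ)).symm x i = x i := fun i => rfl
    constructor
    · intro h
      refine ⟨hρ, ?_⟩
      calc ∑ i, dist (x i) ((0 : EuclideanSpace ℝ (Fin k)) i) ^ 2
          = ∑ i, (x i)^2 := by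
            refine Finset.sum_congr rfl fun i _ => ?_
            rw [show ((0 : EuclideanSpace ℝ (Fin k)) i) = 0 from rfl, Real.dist_eq,
              sub_zero, sq_abs]
        _ ≤ ρ^2 := by simpa [hx] using h
    · intro h
      have := h.2
      calc ∑ i, ((MeasurableEquiv.toLp 2 (Fin k → ℝ)).symm x i)^2
          = ∑ i, dist (x i) ((0 : EuclideanSpace ℝ (Fin k)) i) ^ 2 := by
            refine Finset.sum_congr rfl fun i _ => ?_
            rw [hx, show ((0 : EuclideanSpace ℝ (Fin k)) i) = 0 from rfl, Real.dist_eq,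
              sub_zero, sq_abs]
        _ ≤ ρ^2 := this
  rw [← hE.measure_preimage hmeas.nullMeasurableSet, hpre,
    Measure.addHaar_closedBall' volume _ hρ, finrank_euclideanSpace_fin]

lemma reindex_ball_vol {n : ℕ} (ρ : ℝ) (hρ : 0 ≤ ρ) (T : Finset (Fin n)) :
    volume {v : {i // i ∈ T} → ℝ | ∑ i, (v i)^2 ≤ ρ^2}
      = ENNReal.ofReal (ρ ^ T.card)
          * volume (Metric.closedBall (0 : EuclideanSpace ℝ (Fin T.card)) 1) := by
  classical
  have hmp := volume_measurePreserving_piCongrLeft (fun _ : {i // i ∈ T} => ℝ)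
    T.equivFin.symm
  have hpre : (⇑(MeasurableEquiv.piCongrLeft (fun _ : {i // i ∈ T} => ℝ) T.equivFin.symm))
      ⁻¹' {v : {i // i ∈ T} → ℝ | ∑ i, (v i)^2 ≤ ρ^2}
      = {u : Fin T.card → ℝ | ∑ i, (u i)^2 ≤ ρ^2} := by
    ext u
    simp only [Set.mem_preimage, Set.mem_setOf_eq]
    have happ : ∀ i : {i // i ∈ T},
        (MeasurableEquiv.piCongrLeft (fun _ : {i // i ∈ T} => ℝ) T.equivFin.symm) u i
          = u (T.equivFin i) := by
      intro i
      simp [MeasurableEquiv.piCongrLeft, Equiv.piCongrLeft_apply_apply]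
      rw [Equiv.piCongrLeft_apply_eq_cast, cast_eq, Equiv.symm_symm]
    rw [Finset.sum_congr rfl fun i _ => by rw [happ i],
      Equiv.sum_comp T.equivFin (fun j => (u j)^2)]
  have hmeas : MeasurableSet {v : {i // i ∈ T} → ℝ | ∑ i, (v i)^2 ≤ ρ^2} := by
    have : Continuous fun v : {i // i ∈ T} → ℝ => ∑ i, (v i)^2 := by fun_prop
    exact (isClosed_le this continuous_const).measurableSet
  rw [← hmp.measure_preimage hmeas.nullMeasurableSet, hpre, euclid_ball_vol _ _ hρ]

lemma main_vol {n : ℕ} (l : Fin n → ℝ) (hl : ∀ i, 0 < l i) (ρ : ℝ) (hρ : 0 ≤ ρ) :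
    volume (SS l ρ)
      = ∑ T : Finset (Fin n), ENNReal.ofReal (∏ i ∈ Tᶜ, l i)
          * (ENNReal.ofReal (ρ ^ T.card)
              * volume (Metric.closedBall (0 : EuclideanSpace ℝ (Fin T.card)) 1)) := by
  classical
  rw [partition_vol l hl ρ,
    ← Finset.sum_fiberwise_of_maps_to
      (g := fun ε : Fin n → Fin 3 => Finset.univ.filter fun i => ε i ≠ 1)
      (t := Finset.univ) (fun ε _ => Finset.mem_univ _)
      (fun ε => volume (SS l ρ ∩ RR l ε))]
  refine Finset.sum_congr rfl fun T _ => ?_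
  have hstep : ∀ ε ∈ Finset.univ.filter
      (fun ε : Fin n → Fin 3 => (Finset.univ.filter fun i => ε i ≠ 1) = T),
      volume (SS l ρ ∩ RR l ε)
        = ENNReal.ofReal (∏ i ∈ Tᶜ, l i) * volume (XX ε T ρ) := by
    intro ε hε
    refine per_eps l hl ρ ε T fun i => ?_
    rw [Finset.mem_filter] at hε
    rw [← hε.2, Finset.mem_filter]
    simp
  rw [Finset.sum_congr rfl hstep, ← Finset.mul_sum, fiber_sum ρ T,
    reindex_ball_vol ρ hρ T]

theorem box_steiner_formula (n : ℕ) (hn : 1 ≤ n)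
    (l : Fin n → ℝ) (hl : ∀ i, 0 < l i) (ρ : ℝ) (hρ : 0 ≤ ρ) :
    volume {x : EuclideanSpace ℝ (Fin n) |
        Metric.infDist x {y : EuclideanSpace ℝ (Fin n) | ∀ i, 0 ≤ y i ∧ y i ≤ l i} ≤ ρ}
      = ∑ k ∈ Finset.range (n + 1),
          volume (Metric.closedBall (0 : EuclideanSpace ℝ (Fin k)) 1)
            * ENNReal.ofReal
                ((∑ t ∈ Finset.univ.powersetCard (n - k), ∏ i ∈ t, l i) * ρ ^ k) := by
  classical
  rw [set_eq n l hl ρ hρ]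
  have htrans : volume {x : EuclideanSpace ℝ (Fin n) | ∑ i, (dd (l i) (x i))^2 ≤ ρ^2}
      = volume (SS l ρ) := by
    have hE := EuclideanSpace.volume_preserving_symm_measurableEquiv_toLp (Fin n)
    have : (⇑(MeasurableEquiv.toLp 2 (Fin n → ℝ)).symm) ⁻¹' (SS l ρ)
        = {x : EuclideanSpace ℝ (Fin n) | ∑ i, (dd (l i) (x i))^2 ≤ ρ^2} := rfl
    rw [← this, hE.measure_preimage (meas_SS l ρ).nullMeasurableSet]
  rw [htrans, main_vol l hl ρ hρ,
    ← Finset.sum_fiberwise_of_maps_to (g := Finset.card) (t := Finset.range (n+1))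
      (fun T _ => Finset.mem_range.mpr (Nat.lt_succ_of_le
        (le_trans (Finset.card_le_univ T) (le_of_eq (Finset.card_fin n)))))
      (fun T : Finset (Fin n) => ENNReal.ofReal (∏ i ∈ Tᶜ, l i)
          * (ENNReal.ofReal (ρ ^ T.card)
              * volume (Metric.closedBall (0 : EuclideanSpace ℝ (Fin T.card)) 1)))]
  refine Finset.sum_congr rfl fun k hk => ?_
  have hk' : k ≤ n := Nat.lt_succ_iff.mp (Finset.mem_range.mp hk)
  have hcard : ∀ T ∈ Finset.univ.filter (fun T : Finset (Fin n) => T.card = k),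
      ENNReal.ofReal (∏ i ∈ Tᶜ, l i)
          * (ENNReal.ofReal (ρ ^ T.card)
              * volume (Metric.closedBall (0 : EuclideanSpace ℝ (Fin T.card)) 1))
        = ENNReal.ofReal (∏ i ∈ Tᶜ, l i)
          * (ENNReal.ofReal (ρ ^ k)
              * volume (Metric.closedBall (0 : EuclideanSpace ℝ (Fin k)) 1)) := by
    intro T hT
    rw [(Finset.mem_filter.mp hT).2]
  rw [Finset.sum_congr rfl hcard, ← Finset.sum_mul]
  have hsum : ∑ T ∈ Finset.univ.filter (fun T : Finset (Fin n) => T.card = k),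
      ENNReal.ofReal (∏ i ∈ Tᶜ, l i)
      = ENNReal.ofReal (∑ t ∈ Finset.univ.powersetCard (n - k), ∏ i ∈ t, l i) := by
    rw [ENNReal.ofReal_sum_of_nonneg fun t _ => Finset.prod_nonneg fun i _ => (hl i).le]
    refine Finset.sum_nbij' (fun T => Tᶜ) (fun t => tᶜ) ?_ ?_ ?_ ?_ ?_
    · intro T hT
      rw [Finset.mem_powersetCard_univ, Finset.card_compl, Fintype.card_fin,
        (Finset.mem_filter.mp hT).2]
    · intro t ht
      rw [Finset.mem_filter]
      refine ⟨Finset.mem_univ _, ?_⟩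
      rw [Finset.card_compl, Fintype.card_fin, Finset.mem_powersetCard_univ.mp ht]
      omega
    · intro T _; exact compl_compl T
    · intro t _; exact compl_compl t
    · intro T _; rfl
  rw [hsum]
  rw [ENNReal.ofReal_mul (Finset.sum_nonneg fun t _ => Finset.prod_nonneg fun i _ => (hl i).le)]
  ring
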